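/- Let K > 0 and let X be a unital C*-algebra which is the closure of an increasing union of unital C*-subalgebras X_α (directed by inclusion). If br_K(X_α) ≤ n for each α, then br_K(X) ≤ n. -/
import Mathlib


/-- A tuple of self-adjoint elements is `K`-unessential with witnesses in a subset `S`. -/
def KUnessentialIn {X : Type*} [CStarAlgebra X] (K : ℝ) (S : Set X) {m : ℕ}
    (y : Fin m → X) : Prop :=
  ∀ δ : ℚ, 0 < δ → ∃ z : Fin m → X, (∀ k, z k ∈ S) ∧
    (∀ k, IsSelfAdjoint (z k)) ∧ (∀ k, ‖y k - z k‖ ≤ (δ : ℝ)) ∧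
    ∃ b : X, b ∈ S ∧ (∑ k, (z k) ^ 2) * b = 1 ∧ b * (∑ k, (z k) ^ 2) = 1 ∧
      ‖b‖ ≤ 1 / (K * (δ : ℝ) ^ 2)

/-- If a unital C*-algebra `X` is the closure of the union of a directed family of unital
C*-subalgebras `X_α` with `br_K(X_α) ≤ n` for each `α`, then `br_K(X) ≤ n`. -/
theorem stmt_13 {X : Type*} [CStarAlgebra X] {ι : Type*} (S : ι → StarSubalgebra ℂ X)
    (hdir : Directed (· ≤ ·) S) (hdense : Dense (⋃ i, (S i : Set X)))
    (K : ℝ) (hK : 0 < K) (n : ℕ)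
    (h : ∀ i, ∀ x : Fin (n + 1) → X, (∀ k, x k ∈ S i) → (∀ k, IsSelfAdjoint (x k)) →
      ∀ ε : ℝ, 0 < ε → ∃ y : Fin (n + 1) → X, (∀ k, y k ∈ S i) ∧
        (∀ k, IsSelfAdjoint (y k)) ∧ KUnessentialIn K (S i : Set X) y ∧
        ∀ k, ‖x k - y k‖ < ε) :
    ∀ x : Fin (n + 1) → X, (∀ k, IsSelfAdjoint (x k)) → ∀ ε : ℝ, 0 < ε →
      ∃ y : Fin (n + 1) → X, (∀ k, IsSelfAdjoint (y k)) ∧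
        KUnessentialIn K (Set.univ : Set X) y ∧ ∀ k, ‖x k - y k‖ < ε := by
  classical
  intro x hx ε hε
  have hε2 : 0 < ε / 2 := by positivity
  have happrox : ∀ k : Fin (n + 1), ∃ a ∈ ⋃ i, (S i : Set X), dist (x k) a < ε / 2 :=
    fun k => Metric.mem_closure_iff.mp (hdense (x k)) _ hε2
  choose a hamem hadist using happrox
  choose i hi using fun k => Set.mem_iUnion.mp (hamem k)
  haveI : Nonempty ι := ⟨i 0⟩
  obtain ⟨j, hj⟩ := hdir.finset_le (Finset.image i Finset.univ)
  have hij : ∀ k, S (i k) ≤ S j := fun k => hj _ (Finset.mem_image_of_mem i (Finset.mem_univ k))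
  set x' : Fin (n + 1) → X := fun k => ((2 : ℂ)⁻¹) • (a k + star (a k)) with hx'
  have hx'mem : ∀ k, x' k ∈ S j := fun k =>
    SMulMemClass.smul_mem _ (add_mem (hij k (hi k)) (star_mem (hij k (hi k))))
  have hx'sa : ∀ k, IsSelfAdjoint (x' k) := by
    intro k
    simp [x', IsSelfAdjoint, star_smul, star_add, add_comm]
  have hx'close : ∀ k, ‖x k - x' k‖ < ε / 2 := by
    intro k
    have hxsa : star (x k) = x k := hx k
    have key : x k - x' k = ((2 : ℂ)⁻¹) • ((x k - a k) + star (x k - a k)) := by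
      rw [star_sub, hxsa]
      simp only [x', smul_add, smul_sub]
      have h2 : ((2 : ℂ)⁻¹) • (x k) + ((2 : ℂ)⁻¹) • (x k) = x k := by
        rw [← add_smul]; norm_num
      nth_rewrite 1 [← h2]
      abel
    rw [key]
    calc ‖((2 : ℂ)⁻¹) • ((x k - a k) + star (x k - a k))‖
        ≤ ‖(2 : ℂ)⁻¹‖ * (‖x k - a k‖ + ‖star (x k - a k)‖) := by
          rw [norm_smul]
          gcongr
          exact norm_add_le _ _
      _ = ‖x k - a k‖ := by rw [norm_star]; simp; ring
      _ < ε / 2 := by rw [← dist_eq_norm]; exact hadist k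
  obtain ⟨y, hymem, hysa, hyun, hyclose⟩ := h j x' hx'mem hx'sa (ε / 2) hε2
  refine ⟨y, hysa, ?_, ?_⟩
  · intro δ hδ
    obtain ⟨z, _, hzsa, hzclose, b, _, hb1, hb2, hbnorm⟩ := hyun δ hδ
    exact ⟨z, fun k => Set.mem_univ _, hzsa, hzclose, b, Set.mem_univ _, hb1, hb2, hbnorm⟩
  · intro k
    calc ‖x k - y k‖ ≤ ‖x k - x' k‖ + ‖x' k - y k‖ := by
          simpa using norm_sub_le_norm_sub_add_norm_sub (x k) (x' k) (y k)
      _ < ε / 2 + ε / 2 := add_lt_add (hx'close k) (hyclose k)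
      _ = ε := by ring
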